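/- arXiv:1804.06321 — 4 statements merged into one kernel-verified Lean document; each statement's English description precedes it below -/
import Mathlib

section
/- Under the condition (1 − ρ⁻²)Σ_ρ⁻¹ − B̄B̄ᵀ ≥ 0 with ρ > 1, the fixed point Σ_ρ of the Lyapunov equation satisfies Θ(Σ_ρ) ≤ Σ_ρ, where Θ(X) = Āᵀ(X⁻¹ − B̄B̄ᵀ)⁻¹Ā + θI. -/
open Matrix

section Helpers

variable {n : ℕ}

lemma posDef_smul {A : Matrix (Fin n) (Fin n) ℝ} (hA : A.PosDef) {c : ℝ} (hc : 0 < c) :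
    (c • A).PosDef := by
  refine ⟨by
    simp only [Matrix.IsHermitian, Matrix.conjTranspose_smul, star_trivial]
    exact congrArg _ hA.isHermitian, fun x hx => ?_⟩
  have := hA.2 hx
  have e : (x.sum fun i xi => x.sum fun j xj => star xi * (c • A) i j * xj)
      = c * (x.sum fun i xi => x.sum fun j xj => star xi * A i j * xj) := by
    simp only [Finsupp.mul_sum, Matrix.smul_apply, smul_eq_mul]
    congr 1; funext i xi; congr 1; funext j xj; ring
  rw [e]
  positivity

/-- Loewner antitonicity of inverse: if `D`, `M` are positive definite and `M - D` is PSD,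
then `D⁻¹ - M⁻¹` is PSD. -/
lemma inv_sub_inv_posSemidef {D M : Matrix (Fin n) (Fin n) ℝ}
    (hD : D.PosDef) (hM : M.PosDef) (h : (M - D).PosSemidef) :
    (D⁻¹ - M⁻¹).PosSemidef := by
  have hDu : IsUnit D.det := (Matrix.isUnit_iff_isUnit_det D).mp hD.isUnit
  have hMu : IsUnit M.det := (Matrix.isUnit_iff_isUnit_det M).mp hM.isUnit
  -- key identity : D⁻¹ - M⁻¹ = M⁻¹ * ((M-D) * D⁻¹ * (M-D) + (M-D)) * M⁻¹
  have hMM : M * M⁻¹ = 1 := Matrix.mul_nonsing_inv _ hMu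
  have hMM' : M⁻¹ * M = 1 := Matrix.nonsing_inv_mul _ hMu
  have hDD : D * D⁻¹ = 1 := Matrix.mul_nonsing_inv _ hDu
  have key : D⁻¹ - M⁻¹ = M⁻¹ * ((M - D) * D⁻¹ * (M - D) + (M - D)) * M⁻¹ := by
    have expand : (M - D) * D⁻¹ * (M - D) + (M - D) = M * D⁻¹ * M - M := by
      simp only [Matrix.sub_mul, Matrix.mul_sub]
      simp only [Matrix.mul_assoc, Matrix.nonsing_inv_mul _ hDu, Matrix.mul_one,
        Matrix.mul_nonsing_inv_cancel_left _ _ hDu]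
      abel
    rw [expand, Matrix.mul_sub, Matrix.sub_mul, Matrix.mul_assoc M D⁻¹ M,
      Matrix.nonsing_inv_mul_cancel_left _ _ hMu,
      Matrix.mul_nonsing_inv_cancel_right _ _ hMu, hMM', Matrix.one_mul]
  rw [key]
  have hsym : (M - D)ᴴ = M - D := h.isHermitian
  have hinner : ((M - D) * D⁻¹ * (M - D) + (M - D)).PosSemidef := by
    refine Matrix.PosSemidef.add ?_ h
    have := (hD.inv.posSemidef).conjTranspose_mul_mul_same (M - D)
    rwa [hsym] at this
  have := hinner.conjTranspose_mul_mul_same M⁻¹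
  rwa [Matrix.conjTranspose_nonsing_inv, hM.isHermitian.eq] at this

end Helpers

/-- Spectral radius of a real square matrix. -/
noncomputable def specRad {n : ℕ} (A : Matrix (Fin n) (Fin n) ℝ) : ℝ :=
  sSup ((fun μ => ‖μ‖) '' spectrum ℂ (A.map (Complex.ofReal)))

/-- Under the condition `(1 - ρ⁻²) Σ_ρ⁻¹ - B̄B̄ᵀ ≥ 0` with `ρ > 1`,
the fixed point `Σ_ρ` of the Lyapunov equation satisfies `Θ(Σ_ρ) ≤ Σ_ρ`, where
`Θ(X) = Āᵀ (X⁻¹ - B̄B̄ᵀ)⁻¹ Ā + θ I`. -/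
theorem stmt_5 {n m : ℕ} (Abar : Matrix (Fin n) (Fin n) ℝ)
    (Bbar : Matrix (Fin n) (Fin m) ℝ) (hBB : (Bbar * Bbarᵀ).PosDef)
    (hA : specRad Abar < 1) (ρ θ : ℝ) (hρ : 1 < ρ)
    (hρA : ρ * specRad Abar < 1) (hθ : 0 < θ)
    (Sρ : Matrix (Fin n) (Fin n) ℝ)
    (hS : Sρ = (ρ ^ 2) • (Abarᵀ * Sρ * Abar) + θ • (1 : Matrix (Fin n) (Fin n) ℝ))
    (hSpd : Sρ.PosDef)
    (hcond : ((1 - ρ⁻¹ ^ 2) • Sρ⁻¹ - Bbar * Bbarᵀ).PosSemidef) :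
    (Sρ - (Abarᵀ * (Sρ⁻¹ - Bbar * Bbarᵀ)⁻¹ * Abar
        + θ • (1 : Matrix (Fin n) (Fin n) ℝ))).PosSemidef := by
  set M : Matrix (Fin n) (Fin n) ℝ := Sρ⁻¹ - Bbar * Bbarᵀ with hMdef
  set D : Matrix (Fin n) (Fin n) ℝ := (ρ⁻¹ ^ 2) • Sρ⁻¹ with hDdef
  have hρpos : (0 : ℝ) < ρ := lt_trans one_pos hρ
  have hc : (0 : ℝ) < ρ⁻¹ ^ 2 := by positivity
  have hSinv : Sρ⁻¹.PosDef := hSpd.inv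
  have hD : D.PosDef := posDef_smul hSinv hc
  have hMD : M - D = (1 - ρ⁻¹ ^ 2) • Sρ⁻¹ - Bbar * Bbarᵀ := by
    rw [hMdef, hDdef, sub_smul, one_smul]
    abel
  have hMDpsd : (M - D).PosSemidef := hMD ▸ hcond
  have hM : M.PosDef := by
    have : M = (M - D) + D := by abel
    rw [this]
    exact Matrix.PosDef.posSemidef_add hMDpsd hD
  have key : (D⁻¹ - M⁻¹).PosSemidef := inv_sub_inv_posSemidef hD hM hMDpsd
  -- D⁻¹ = ρ^2 • Sρ
  have hSu : IsUnit Sρ.det := (Matrix.isUnit_iff_isUnit_det Sρ).mp hSpd.isUnit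
  have hSuinv : IsUnit Sρ⁻¹.det := (Matrix.isUnit_iff_isUnit_det _).mp hSinv.isUnit
  have hDinv : D⁻¹ = (ρ ^ 2) • Sρ := by
    haveI hinvert : Invertible (ρ⁻¹ ^ 2) := invertibleOfNonzero (ne_of_gt hc)
    rw [hDdef, Matrix.inv_smul (A := Sρ⁻¹) (ρ⁻¹ ^ 2) hSuinv, Matrix.nonsing_inv_nonsing_inv _ hSu]
    congr 1
    rw [invOf_eq_inv]; rw [inv_pow, inv_inv]
  have key2 : ((ρ ^ 2) • Sρ - M⁻¹).PosSemidef := hDinv ▸ key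
  have conj : (Abarᵀ * ((ρ ^ 2) • Sρ - M⁻¹) * Abar).PosSemidef := by
    have := key2.conjTranspose_mul_mul_same Abar
    simpa [Matrix.conjTranspose_eq_transpose_of_trivial] using this
  have goal_eq : Sρ - (Abarᵀ * M⁻¹ * Abar + θ • (1 : Matrix (Fin n) (Fin n) ℝ))
      = Abarᵀ * ((ρ ^ 2) • Sρ - M⁻¹) * Abar := by
    conv_lhs => rw [hS]
    simp only [Matrix.mul_sub, Matrix.sub_mul, Matrix.mul_smul, Matrix.smul_mul]
    abel
  rw [goal_eq]
  exact conj
end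

section
/- The compact set 𝒞 = {X symmetric : θI ≤ X ≤ Σ_ρ} is invariant under Θ: if X ∈ 𝒞 then Θ(X) ∈ 𝒞. Moreover 𝒞 is nonempty since θI ∈ 𝒞. -/
open Matrix

namespace Stmt6Aux

variable {n : ℕ}

open scoped MatrixOrder

lemma conjT_eq (A : Matrix (Fin n) (Fin n) ℝ) : Aᴴ = Aᵀ :=
  Matrix.conjTranspose_eq_transpose_of_trivial A

lemma smul_psd {c : ℝ} (hc : 0 ≤ c) {A : Matrix (Fin n) (Fin n) ℝ}
    (hA : A.PosSemidef) : (c • A).PosSemidef := by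
  refine PosSemidef.of_dotProduct_mulVec_nonneg ?_ fun x => ?_
  · unfold Matrix.IsHermitian
    rw [Matrix.conjTranspose_smul, star_trivial, hA.1.eq]
  · rw [Matrix.smul_mulVec, dotProduct_smul, smul_eq_mul]
    exact mul_nonneg hc (hA.dotProduct_mulVec_nonneg x)

lemma smul_pd {c : ℝ} (hc : 0 < c) {A : Matrix (Fin n) (Fin n) ℝ}
    (hA : A.PosDef) : (c • A).PosDef := by
  refine PosDef.of_dotProduct_mulVec_pos (smul_psd hc.le hA.posSemidef).1 fun x hx => ?_
  rw [Matrix.smul_mulVec, dotProduct_smul, smul_eq_mul]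
  exact mul_pos hc (hA.dotProduct_mulVec_pos hx)

lemma pd_of_psd_isUnit {P : Matrix (Fin n) (Fin n) ℝ} (hP : P.PosSemidef)
    (hu : IsUnit P) : P.PosDef := by
  refine PosDef.of_dotProduct_mulVec_pos hP.1 fun x hx => ?_
  rcases lt_or_eq_of_le (hP.dotProduct_mulVec_nonneg x) with h | h
  · exact h
  · exfalso
    have h0 : P *ᵥ x = 0 := (hP.dotProduct_mulVec_zero_iff x).mp h.symm
    have hinj := Matrix.mulVec_injective_iff_isUnit.mpr hu
    exact hx (hinj (by simpa using h0))

lemma sqrt_pd {A : Matrix (Fin n) (Fin n) ℝ} (hA : A.PosDef) :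
    (CFC.sqrt A).PosDef := by
  refine pd_of_psd_isUnit (CFC.sqrt_nonneg A).posSemidef ?_
  rw [Matrix.isUnit_iff_isUnit_det, isUnit_iff_ne_zero]
  intro h
  have := CFC.sqrt_mul_sqrt_self A hA.posSemidef.nonneg
  have hdet : (CFC.sqrt A).det * (CFC.sqrt A).det = A.det := by
    rw [← Matrix.det_mul, this]
  rw [h, mul_zero] at hdet
  exact hA.det_pos.ne (by rw [hdet])

/-- congruence preserves PSD of differences -/
lemma congr_sub {A B : Matrix (Fin n) (Fin n) ℝ} (h : (B - A).PosSemidef)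
    (C : Matrix (Fin n) (Fin n) ℝ) : (Cᵀ * B * C - Cᵀ * A * C).PosSemidef := by
  have := h.conjTranspose_mul_mul_same C
  rw [conjT_eq] at this
  have e : Cᵀ * (B - A) * C = Cᵀ * B * C - Cᵀ * A * C := by
    rw [Matrix.mul_sub, Matrix.sub_mul]
  rwa [e] at this

lemma congr_psd {A : Matrix (Fin n) (Fin n) ℝ} (h : A.PosSemidef)
    (C : Matrix (Fin n) (Fin n) ℝ) : (Cᵀ * A * C).PosSemidef := by
  have := h.conjTranspose_mul_mul_same C
  rwa [conjT_eq] at this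

/-- If P is posdef and P ≥ 1 then P⁻¹ ≤ 1. -/
lemma one_sub_inv {P : Matrix (Fin n) (Fin n) ℝ} (hP : P.PosDef)
    (h : (P - 1).PosSemidef) : (1 - P⁻¹).PosSemidef := by
  have hPi : P⁻¹.PosDef := hP.inv
  set T := CFC.sqrt P⁻¹ with hT
  have hTpd : T.PosDef := sqrt_pd hPi
  have hTT : T * T = P⁻¹ := CFC.sqrt_mul_sqrt_self P⁻¹ hPi.posSemidef.nonneg
  have hTherm : Tᵀ = T := by rw [← conjT_eq]; exact (CFC.sqrt_nonneg P⁻¹).posSemidef.1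
  have hTu : IsUnit T.det := Matrix.isUnit_iff_isUnit_det T |>.mp hTpd.isUnit
  have hPu : IsUnit P.det := Matrix.isUnit_iff_isUnit_det P |>.mp hP.isUnit
  have hPinv : P = (T * T)⁻¹ := by rw [hTT, Matrix.nonsing_inv_nonsing_inv P hPu]
  have hTPT : T * P * T = 1 := by
    rw [hPinv, Matrix.mul_inv_rev, ← Matrix.mul_assoc, Matrix.mul_nonsing_inv T hTu,
      Matrix.one_mul, Matrix.nonsing_inv_mul T hTu]
  have key := congr_sub h T
  rw [hTherm] at key
  have e1 : T * (1:Matrix (Fin n) (Fin n) ℝ) * T = P⁻¹ := by rw [Matrix.mul_one, hTT]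
  rwa [hTPT, e1] at key

/-- Inverse is antitone on posdef matrices. -/
lemma inv_antitone {A B : Matrix (Fin n) (Fin n) ℝ} (hA : A.PosDef) (hB : B.PosDef)
    (h : (B - A).PosSemidef) : (A⁻¹ - B⁻¹).PosSemidef := by
  have hAi : A⁻¹.PosDef := hA.inv
  set R := CFC.sqrt A⁻¹ with hR
  have hRpd : R.PosDef := sqrt_pd hAi
  have hRR : R * R = A⁻¹ := CFC.sqrt_mul_sqrt_self A⁻¹ hAi.posSemidef.nonneg
  have hRherm : Rᵀ = R := by rw [← conjT_eq]; exact (CFC.sqrt_nonneg A⁻¹).posSemidef.1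
  have hRu : IsUnit R.det := Matrix.isUnit_iff_isUnit_det R |>.mp hRpd.isUnit
  have hAu : IsUnit A.det := Matrix.isUnit_iff_isUnit_det A |>.mp hA.isUnit
  have hBu : IsUnit B.det := Matrix.isUnit_iff_isUnit_det B |>.mp hB.isUnit
  have hAinv : A = (R * R)⁻¹ := by rw [hRR, Matrix.nonsing_inv_nonsing_inv A hAu]
  have hRAR : R * A * R = 1 := by
    rw [hAinv, Matrix.mul_inv_rev, ← Matrix.mul_assoc, Matrix.mul_nonsing_inv R hRu,
      Matrix.one_mul, Matrix.nonsing_inv_mul R hRu]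
  -- M = R * B * R is posdef and ≥ 1
  have hM : (R * B * R).PosDef := by
    refine pd_of_psd_isUnit (by simpa [hRherm] using congr_psd hB.posSemidef R) ?_
    rw [Matrix.isUnit_iff_isUnit_det, Matrix.det_mul, Matrix.det_mul]
    exact (hRu.mul (Matrix.isUnit_iff_isUnit_det B |>.mp hB.isUnit)).mul hRu
  have hM1 : (R * B * R - 1).PosSemidef := by
    have := congr_sub h R
    rwa [hRherm, hRAR] at this
  have hinv := one_sub_inv hM hM1
  -- conjugate back by R
  have key := congr_sub hinv R
  rw [hRherm] at key
  have e1 : R * (1:Matrix (Fin n) (Fin n) ℝ) * R = A⁻¹ := by rw [Matrix.mul_one, hRR]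
  have e2 : R * (R * B * R)⁻¹ * R = B⁻¹ := by
    rw [Matrix.mul_inv_rev, Matrix.mul_inv_rev, ← Matrix.mul_assoc, ← Matrix.mul_assoc,
      Matrix.mul_nonsing_inv R hRu, Matrix.one_mul, Matrix.mul_assoc,
      Matrix.nonsing_inv_mul R hRu, Matrix.mul_one]
  rwa [e1, e2] at key

end Stmt6Aux

open Stmt6Aux in
/-- The compact set `𝒞 = {X symmetric : θI ≤ X ≤ Σ_ρ}` is invariant
under `Θ(X) = Āᵀ (X⁻¹ - B̄B̄ᵀ)⁻¹ Ā + θ I`, and is nonempty since `θI ∈ 𝒞`. -/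
theorem stmt_6 {n m : ℕ} (Abar : Matrix (Fin n) (Fin n) ℝ)
    (Bbar : Matrix (Fin n) (Fin m) ℝ) (hBB : (Bbar * Bbarᵀ).PosDef)
    (hA : specRad Abar < 1) (ρ θ : ℝ) (hρ : 1 < ρ)
    (hρA : ρ * specRad Abar < 1) (hθ : 0 < θ)
    (Sρ : Matrix (Fin n) (Fin n) ℝ)
    (hS : Sρ = (ρ ^ 2) • (Abarᵀ * Sρ * Abar) + θ • (1 : Matrix (Fin n) (Fin n) ℝ))
    (hSpd : Sρ.PosDef)
    (hcond : ((1 - ρ⁻¹ ^ 2) • Sρ⁻¹ - Bbar * Bbarᵀ).PosSemidef) :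
    -- θI belongs to 𝒞:
    (Sρ - θ • (1 : Matrix (Fin n) (Fin n) ℝ)).PosSemidef ∧
    -- invariance of 𝒞 under Θ:
    ∀ X : Matrix (Fin n) (Fin n) ℝ, X.IsHermitian →
      (X - θ • (1 : Matrix (Fin n) (Fin n) ℝ)).PosSemidef →
      (Sρ - X).PosSemidef →
      ((Abarᵀ * (X⁻¹ - Bbar * Bbarᵀ)⁻¹ * Abar + θ • (1 : Matrix (Fin n) (Fin n) ℝ))
          - θ • (1 : Matrix (Fin n) (Fin n) ℝ)).PosSemidef ∧
      (Sρ - (Abarᵀ * (X⁻¹ - Bbar * Bbarᵀ)⁻¹ * Abar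
          + θ • (1 : Matrix (Fin n) (Fin n) ℝ))).PosSemidef := by
  have hρ0 : (0:ℝ) < ρ := lt_trans one_pos hρ
  have hρ2 : (0:ℝ) < ρ ^ 2 := by positivity
  have hSsub : Sρ - θ • (1 : Matrix (Fin n) (Fin n) ℝ)
      = (ρ ^ 2) • (Abarᵀ * Sρ * Abar) := by
    conv_lhs => rw [hS]
    abel
  have hconj : ((ρ ^ 2) • (Abarᵀ * Sρ * Abar)).PosSemidef :=
    smul_psd hρ2.le (congr_psd hSpd.posSemidef Abar)
  refine ⟨hSsub ▸ hconj, ?_⟩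
  intro X hXh h1 h2
  -- X is posdef
  have hθ1 : ((θ:ℝ) • (1 : Matrix (Fin n) (Fin n) ℝ)).PosDef :=
    smul_pd hθ Matrix.PosDef.one
  have hXpd : X.PosDef := by
    have : X = (X - θ • (1 : Matrix (Fin n) (Fin n) ℝ)) + θ • 1 := by abel
    rw [this]
    exact Matrix.PosDef.posSemidef_add h1 hθ1
  have hSinv : Sρ⁻¹.PosDef := hSpd.inv
  -- X⁻¹ ≥ Sρ⁻¹
  have hXS : (X⁻¹ - Sρ⁻¹).PosSemidef := inv_antitone hXpd hSpd h2
  -- D = X⁻¹ - BBᵀ satisfies D ≥ ρ⁻² • Sρ⁻¹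
  set D := X⁻¹ - Bbar * Bbarᵀ with hD
  have hDge : (D - (ρ⁻¹ ^ 2) • Sρ⁻¹).PosSemidef := by
    have halg : D - (ρ⁻¹ ^ 2) • Sρ⁻¹
        = (X⁻¹ - Sρ⁻¹) + ((1 - ρ⁻¹ ^ 2) • Sρ⁻¹ - Bbar * Bbarᵀ) := by
      rw [hD, sub_smul, one_smul]
      abel
    rw [halg]
    exact hXS.add hcond
  have hρinv2 : (0:ℝ) < ρ⁻¹ ^ 2 := by positivity
  have hsmulS : ((ρ⁻¹ ^ 2) • Sρ⁻¹).PosDef := smul_pd hρinv2 hSinv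
  have hDpd : D.PosDef := by
    have : D = (D - (ρ⁻¹ ^ 2) • Sρ⁻¹) + (ρ⁻¹ ^ 2) • Sρ⁻¹ := by abel
    rw [this]
    exact Matrix.PosDef.posSemidef_add hDge hsmulS
  have hDinv : D⁻¹.PosDef := hDpd.inv
  constructor
  · have : Abarᵀ * D⁻¹ * Abar + θ • (1 : Matrix (Fin n) (Fin n) ℝ)
        - θ • (1 : Matrix (Fin n) (Fin n) ℝ) = Abarᵀ * D⁻¹ * Abar := by abel
    rw [this]
    exact congr_psd hDinv.posSemidef Abar
  · -- need (ρ⁻² • Sρ⁻¹)⁻¹ = ρ² • Sρ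
    have hSu : IsUnit Sρ.det := Matrix.isUnit_iff_isUnit_det Sρ |>.mp hSpd.isUnit
    have hinv_eq : ((ρ⁻¹ ^ 2) • Sρ⁻¹)⁻¹ = (ρ ^ 2) • Sρ := by
      apply Matrix.inv_eq_right_inv
      rw [Matrix.smul_mul, Matrix.mul_smul, smul_smul, Matrix.nonsing_inv_mul Sρ hSu]
      rw [show (ρ⁻¹ ^ 2 * ρ ^ 2 : ℝ) = 1 by field_simp]
      rw [one_smul]
    have hanti : ((ρ ^ 2) • Sρ - D⁻¹).PosSemidef := by
      have := inv_antitone hsmulS hDpd hDge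
      rwa [hinv_eq] at this
    have key := congr_sub hanti Abar
    have e1 : Abarᵀ * ((ρ ^ 2) • Sρ) * Abar = (ρ ^ 2) • (Abarᵀ * Sρ * Abar) := by
      rw [Matrix.mul_smul, Matrix.smul_mul]
    rw [e1] at key
    have e2 : Sρ - (Abarᵀ * D⁻¹ * Abar + θ • (1 : Matrix (Fin n) (Fin n) ℝ))
        = (ρ ^ 2) • (Abarᵀ * Sρ * Abar) - Abarᵀ * D⁻¹ * Abar := by
      conv_lhs => rw [hS]
      abel
    rw [e2]
    exact key
end

section
/- Define the backward sequence X_T = θI and X_t = Θ(X_{t+1}) for t < T. Then the sequence (X_{T−k})_{k≥0} is nondecreasing in the Loewner order and remains in the set 𝒞 = {X : θI ≤ X ≤ Σ_ρ}; consequently it converges as k → ∞ to a matrix X ∈ 𝒞 satisfying the algebraic Riccati equation X = Āᵀ(X⁻¹ − B̄B̄ᵀ)⁻¹Ā + θI. -/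
open Matrix

section Aux

variable {n : ℕ}

private lemma psd_quad {M : Matrix (Fin n) (Fin n) ℝ} (h : M.PosSemidef) (x : Fin n → ℝ) :
    0 ≤ x ⬝ᵥ M *ᵥ x := by simpa using h.dotProduct_mulVec_nonneg x

private lemma psd_of {M : Matrix (Fin n) (Fin n) ℝ} (h1 : M.IsHermitian)
    (h2 : ∀ x, 0 ≤ x ⬝ᵥ M *ᵥ x) : M.PosSemidef :=
  Matrix.PosSemidef.of_dotProduct_mulVec_nonneg h1 (fun x => by simpa using h2 x)

private lemma pd_of {M : Matrix (Fin n) (Fin n) ℝ} (h1 : M.IsHermitian)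
    (h2 : ∀ x, x ≠ 0 → 0 < x ⬝ᵥ M *ᵥ x) : M.PosDef :=
  Matrix.PosDef.of_dotProduct_mulVec_pos h1 (fun x hx => by simpa using h2 x hx)

private lemma herm_symm {M : Matrix (Fin n) (Fin n) ℝ} (h : M.IsHermitian) : Mᵀ = M := by
  rw [← conjTranspose_eq_transpose_of_trivial, h.eq]

private lemma herm_of_symm {M : Matrix (Fin n) (Fin n) ℝ} (h : Mᵀ = M) : M.IsHermitian := by
  rw [Matrix.IsHermitian, conjTranspose_eq_transpose_of_trivial]; exact h

private lemma herm_dot {A : Matrix (Fin n) (Fin n) ℝ} (hA : A.IsHermitian) (u v : Fin n → ℝ) :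
    u ⬝ᵥ A *ᵥ v = (A *ᵥ u) ⬝ᵥ v := by
  rw [dotProduct_mulVec, ← mulVec_transpose, herm_symm hA]

private lemma psd_smul' {M : Matrix (Fin n) (Fin n) ℝ} (h : M.PosSemidef) {c : ℝ} (hc : 0 ≤ c) :
    (c • M).PosSemidef := by
  refine psd_of ?_ fun x => ?_
  · rw [Matrix.IsHermitian, conjTranspose_smul, star_trivial, h.1.eq]
  · rw [smul_mulVec, dotProduct_smul, smul_eq_mul]
    exact mul_nonneg hc (psd_quad h x)

private lemma pd_smul' {M : Matrix (Fin n) (Fin n) ℝ} (h : M.PosDef) {c : ℝ} (hc : 0 < c) :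
    (c • M).PosDef := by
  refine pd_of ?_ fun x hx => ?_
  · rw [Matrix.IsHermitian, conjTranspose_smul, star_trivial, h.1.eq]
  · rw [smul_mulVec, dotProduct_smul, smul_eq_mul]
    exact mul_pos hc (by simpa using h.dotProduct_mulVec_pos hx)

private lemma pd_congr {M N : Matrix (Fin n) (Fin n) ℝ} (h : M.PosDef) (e : M = N) : N.PosDef :=
  e ▸ h

private lemma psd_congr {M N : Matrix (Fin n) (Fin n) ℝ} (h : M.PosSemidef) (e : M = N) :
    N.PosSemidef := e ▸ h

/-- congruence by a (real) matrix preserves positive semidefiniteness -/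
private lemma psd_conj {M : Matrix (Fin n) (Fin n) ℝ} (h : M.PosSemidef)
    (A : Matrix (Fin n) (Fin n) ℝ) : (Aᵀ * M * A).PosSemidef := by
  have := h.conjTranspose_mul_mul_same A
  rwa [conjTranspose_eq_transpose_of_trivial] at this

/-- Loewner order is reversed by matrix inversion (on positive definite matrices). -/
private lemma inv_antitone {A B : Matrix (Fin n) (Fin n) ℝ} (hA : A.PosDef) (hB : B.PosDef)
    (h : (B - A).PosSemidef) : (A⁻¹ - B⁻¹).PosSemidef := by
  have hAu : IsUnit A.det := hA.det_pos.ne'.isUnit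
  have hBu : IsUnit B.det := hB.det_pos.ne'.isUnit
  refine psd_of (hA.isHermitian.inv.sub hB.isHermitian.inv) fun x => ?_
  set y := B⁻¹ *ᵥ x with hy
  set w := A⁻¹ *ᵥ x with hw
  have hBy : B *ᵥ y = x := by
    rw [hy, mulVec_mulVec, Matrix.mul_nonsing_inv _ hBu, one_mulVec]
  have hAw : A *ᵥ w = x := by
    rw [hw, mulVec_mulVec, Matrix.mul_nonsing_inv _ hAu, one_mulVec]
  have key : 0 ≤ (y - w) ⬝ᵥ A *ᵥ (y - w) := psd_quad hA.posSemidef (y - w)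
  have e1 : y ⬝ᵥ A *ᵥ w = y ⬝ᵥ x := by rw [hAw]
  have e2 : w ⬝ᵥ A *ᵥ y = x ⬝ᵥ y := by rw [herm_dot hA.isHermitian, hAw]
  have e3 : w ⬝ᵥ A *ᵥ w = w ⬝ᵥ x := by rw [hAw]
  have expand : (y - w) ⬝ᵥ A *ᵥ (y - w)
      = y ⬝ᵥ A *ᵥ y - (x ⬝ᵥ y) - (x ⬝ᵥ y) + x ⬝ᵥ w := by
    rw [mulVec_sub, dotProduct_sub, sub_dotProduct, sub_dotProduct, e1, e2, e3,
      dotProduct_comm y x, dotProduct_comm w x]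
    ring
  have hmono : y ⬝ᵥ A *ᵥ y ≤ y ⬝ᵥ B *ᵥ y := by
    have := psd_quad h y
    rw [sub_mulVec, dotProduct_sub] at this
    linarith
  have hBq : y ⬝ᵥ B *ᵥ y = x ⬝ᵥ y := by rw [hBy, dotProduct_comm]
  have goal : 0 ≤ x ⬝ᵥ w - x ⬝ᵥ y := by
    rw [expand] at key
    linarith [hmono, hBq ▸ hmono]
  calc (0:ℝ) ≤ x ⬝ᵥ w - x ⬝ᵥ y := goal
    _ = x ⬝ᵥ (A⁻¹ - B⁻¹) *ᵥ x := by rw [sub_mulVec, dotProduct_sub, hw, hy]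

private lemma smul_inv_eq {c : ℝ} (hc : c ≠ 0) {M : Matrix (Fin n) (Fin n) ℝ}
    (hM : IsUnit M.det) : (c • M)⁻¹ = c⁻¹ • M⁻¹ := by
  apply Matrix.inv_eq_left_inv
  rw [Matrix.smul_mul, Matrix.mul_smul, smul_smul, inv_mul_cancel₀ hc,
    Matrix.nonsing_inv_mul _ hM, one_smul]

private lemma contAt_inv {M : Matrix (Fin n) (Fin n) ℝ} (h : M.det ≠ 0) :
    ContinuousAt (fun N : Matrix (Fin n) (Fin n) ℝ => N⁻¹) M := by
  have heq : (fun N : Matrix (Fin n) (Fin n) ℝ => N⁻¹)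
      = fun N => (N.det)⁻¹ • N.adjugate := by
    funext N; rw [Matrix.inv_def, Ring.inverse_eq_inv]
  rw [heq]
  exact (((continuous_id.matrix_det).continuousAt).inv₀ h).smul
    (continuous_id.matrix_adjugate).continuousAt

/-- a limit of positive semidefinite matrices is positive semidefinite -/
private lemma psd_limit {Z : ℕ → Matrix (Fin n) (Fin n) ℝ} {L : Matrix (Fin n) (Fin n) ℝ}
    (hZ : ∀ k, (Z k).PosSemidef) (hL : Filter.Tendsto Z Filter.atTop (nhds L)) :
    L.PosSemidef := by
  have hent : ∀ i j, Filter.Tendsto (fun k => Z k i j) Filter.atTop (nhds (L i j)) :=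
    fun i j => tendsto_pi_nhds.1 (tendsto_pi_nhds.1 hL i) j
  refine psd_of (herm_of_symm ?_) fun v => ?_
  · ext i j
    have h1 : Filter.Tendsto (fun k => Z k i j) Filter.atTop (nhds (L j i)) := by
      refine (hent j i).congr fun k => ?_
      have := herm_symm (hZ k).1
      calc Z k j i = (Z k)ᵀ i j := rfl
        _ = Z k i j := by rw [this]
    simpa [Matrix.transpose_apply] using tendsto_nhds_unique h1 (hent i j)
  · have hc : Filter.Tendsto (fun k => v ⬝ᵥ Z k *ᵥ v) Filter.atTop (nhds (v ⬝ᵥ L *ᵥ v)) :=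
      ((continuous_const.dotProduct
        (continuous_id.matrix_mulVec continuous_const)).tendsto L).comp hL
    exact ge_of_tendsto' hc fun k => psd_quad (hZ k) v

end Aux

/-- The backward sequence `X_T = θI`, `X_t = Θ(X_{t+1})`
(reindexed as `Y k := X_{T-k}`, so `Y 0 = θI` and `Y (k+1) = Θ (Y k)`) is
nondecreasing in the Loewner order, stays in `𝒞 = {X : θI ≤ X ≤ Σ_ρ}`, and
converges to a matrix `X ∈ 𝒞` solving the algebraic Riccati equation
`X = Āᵀ (X⁻¹ - B̄B̄ᵀ)⁻¹ Ā + θ I`. -/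
theorem stmt_7 {n m : ℕ} (Abar : Matrix (Fin n) (Fin n) ℝ)
    (Bbar : Matrix (Fin n) (Fin m) ℝ) (hBB : (Bbar * Bbarᵀ).PosDef)
    (hA : specRad Abar < 1) (ρ θ : ℝ) (hρ : 1 < ρ)
    (hρA : ρ * specRad Abar < 1) (hθ : 0 < θ)
    (Sρ : Matrix (Fin n) (Fin n) ℝ)
    (hS : Sρ = (ρ ^ 2) • (Abarᵀ * Sρ * Abar) + θ • (1 : Matrix (Fin n) (Fin n) ℝ))
    (hSpd : Sρ.PosDef)
    (hcond : ((1 - ρ⁻¹ ^ 2) • Sρ⁻¹ - Bbar * Bbarᵀ).PosSemidef)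
    (Y : ℕ → Matrix (Fin n) (Fin n) ℝ)
    (hY0 : Y 0 = θ • (1 : Matrix (Fin n) (Fin n) ℝ))
    (hYrec : ∀ k : ℕ, Y (k + 1) =
      Abarᵀ * ((Y k)⁻¹ - Bbar * Bbarᵀ)⁻¹ * Abar + θ • (1 : Matrix (Fin n) (Fin n) ℝ)) :
    (∀ k : ℕ, (Y k - θ • (1 : Matrix (Fin n) (Fin n) ℝ)).PosSemidef ∧
      (Sρ - Y k).PosSemidef) ∧
    (∀ k : ℕ, (Y (k + 1) - Y k).PosSemidef) ∧
    ∃ X : Matrix (Fin n) (Fin n) ℝ,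
      Filter.Tendsto Y Filter.atTop (nhds X) ∧
      (X - θ • (1 : Matrix (Fin n) (Fin n) ℝ)).PosSemidef ∧
      (Sρ - X).PosSemidef ∧
      X = Abarᵀ * (X⁻¹ - Bbar * Bbarᵀ)⁻¹ * Abar + θ • (1 : Matrix (Fin n) (Fin n) ℝ) := by
  have hθ1herm : (θ • (1 : Matrix (Fin n) (Fin n) ℝ)).IsHermitian := by
    rw [Matrix.IsHermitian, conjTranspose_smul, star_trivial, conjTranspose_one]
  have hθ1pd : (θ • (1 : Matrix (Fin n) (Fin n) ℝ)).PosDef := by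
    refine pd_of hθ1herm fun x hx => ?_
    rw [smul_mulVec, one_mulVec, dotProduct_smul, smul_eq_mul]
    have hxx : 0 < x ⬝ᵥ x := by
      simpa using (dotProduct_star_self_pos_iff (v := x)).2 hx
    exact mul_pos hθ hxx
  have hSu : IsUnit Sρ.det := hSpd.det_pos.ne'.isUnit
  have hSs : (Sρ - θ • (1 : Matrix (Fin n) (Fin n) ℝ)).PosSemidef := by
    have h1 : (Abarᵀ * Sρ * Abar).PosSemidef := psd_conj hSpd.posSemidef Abar
    have h2 := psd_smul' h1 (sq_nonneg ρ)
    refine psd_congr h2 ?_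
    rw [eq_sub_iff_add_eq]
    exact hS.symm
  -- the key structural lemma about the map Θ
  have core : ∀ X : Matrix (Fin n) (Fin n) ℝ, X.PosDef → (Sρ - X).PosSemidef →
      (X⁻¹ - Bbar * Bbarᵀ).PosDef ∧
      (((ρ ^ 2) • Sρ) - (X⁻¹ - Bbar * Bbarᵀ)⁻¹).PosSemidef := by
    intro X hX hXS
    have hρ0 : (0:ℝ) < ρ := lt_trans one_pos hρ
    have hc0 : (0:ℝ) < ρ⁻¹ ^ 2 := by positivity
    have h1 : (X⁻¹ - Sρ⁻¹).PosSemidef := inv_antitone hX hSpd hXS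
    have hsplit : (X⁻¹ - Bbar * Bbarᵀ) - (ρ⁻¹ ^ 2) • Sρ⁻¹
        = (X⁻¹ - Sρ⁻¹) + ((1 - ρ⁻¹ ^ 2) • Sρ⁻¹ - Bbar * Bbarᵀ) := by
      rw [sub_smul, one_smul]; abel
    have h2 : ((X⁻¹ - Bbar * Bbarᵀ) - (ρ⁻¹ ^ 2) • Sρ⁻¹).PosSemidef := by
      rw [hsplit]; exact h1.add hcond
    have h3 : (X⁻¹ - Bbar * Bbarᵀ).PosDef := by
      have := Matrix.PosDef.posSemidef_add h2 (pd_smul' hSpd.inv hc0)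
      exact pd_congr this (by abel)
    have hρ2 : (ρ:ℝ) ^ 2 ≠ 0 := by positivity
    have h4 : ((ρ ^ 2) • Sρ)⁻¹ = (ρ⁻¹ ^ 2) • Sρ⁻¹ := by
      rw [smul_inv_eq hρ2 hSu, inv_pow]
    have h5 : ((ρ ^ 2) • Sρ).PosDef := pd_smul' hSpd (by positivity)
    have h6 := inv_antitone h5.inv h3 (by rw [h4]; exact h2)
    rw [Matrix.nonsing_inv_nonsing_inv _ h5.det_pos.ne'.isUnit] at h6
    exact ⟨h3, h6⟩
  have stepLow : ∀ X : Matrix (Fin n) (Fin n) ℝ, X.PosDef → (Sρ - X).PosSemidef →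
      ((Abarᵀ * (X⁻¹ - Bbar * Bbarᵀ)⁻¹ * Abar + θ • (1 : Matrix (Fin n) (Fin n) ℝ))
        - θ • (1 : Matrix (Fin n) (Fin n) ℝ)).PosSemidef := by
    intro X hX hXS
    have hW := (core X hX hXS).1
    exact psd_congr (psd_conj hW.inv.posSemidef Abar) (by abel)
  have stepUp : ∀ X : Matrix (Fin n) (Fin n) ℝ, X.PosDef → (Sρ - X).PosSemidef →
      (Sρ - (Abarᵀ * (X⁻¹ - Bbar * Bbarᵀ)⁻¹ * Abar
        + θ • (1 : Matrix (Fin n) (Fin n) ℝ))).PosSemidef := by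
    intro X hX hXS
    have h6 := (core X hX hXS).2
    refine psd_congr (psd_conj h6 Abar) ?_
    conv_rhs => rw [hS]
    rw [Matrix.mul_sub, Matrix.sub_mul, Matrix.mul_smul, Matrix.smul_mul]
    abel
  have stepMono : ∀ X X' : Matrix (Fin n) (Fin n) ℝ, X.PosDef → X'.PosDef →
      (Sρ - X').PosSemidef → (X' - X).PosSemidef →
      ((Abarᵀ * (X'⁻¹ - Bbar * Bbarᵀ)⁻¹ * Abar + θ • (1 : Matrix (Fin n) (Fin n) ℝ))
        - (Abarᵀ * (X⁻¹ - Bbar * Bbarᵀ)⁻¹ * Abar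
          + θ • (1 : Matrix (Fin n) (Fin n) ℝ))).PosSemidef := by
    intro X X' hX hX' hX'S hXX'
    have hXS : (Sρ - X).PosSemidef := psd_congr (hX'S.add hXX') (by abel)
    have hW := (core X hX hXS).1
    have hW' := (core X' hX' hX'S).1
    have hdiff : ((X⁻¹ - Bbar * Bbarᵀ) - (X'⁻¹ - Bbar * Bbarᵀ)).PosSemidef :=
      psd_congr (inv_antitone hX hX' hXX') (by abel)
    have hinv := inv_antitone hW' hW hdiff
    refine psd_congr (psd_conj hinv Abar) ?_
    rw [Matrix.mul_sub, Matrix.sub_mul]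
    abel
  -- the main induction
  have main : ∀ k : ℕ, (Y k - θ • (1 : Matrix (Fin n) (Fin n) ℝ)).PosSemidef ∧
      (Sρ - Y k).PosSemidef ∧ (Y (k + 1) - Y k).PosSemidef := by
    intro k
    induction k with
    | zero =>
      have e0 : (Sρ - Y 0).PosSemidef := by rw [hY0]; exact hSs
      refine ⟨by rw [hY0, sub_self]; exact Matrix.PosSemidef.zero, e0, ?_⟩
      rw [hYrec 0, hY0]
      exact stepLow _ hθ1pd hSs
    | succ k ih =>
      obtain ⟨ih1, ih2, ih3⟩ := ih
      have hpdk : (Y k).PosDef := pd_congr (hθ1pd.add_posSemidef ih1) (by abel)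
      have low : (Y (k + 1) - θ • (1 : Matrix (Fin n) (Fin n) ℝ)).PosSemidef := by
        rw [hYrec k]; exact stepLow _ hpdk ih2
      have up : (Sρ - Y (k + 1)).PosSemidef := by
        rw [hYrec k]; exact stepUp _ hpdk ih2
      have hpdk1 : (Y (k + 1)).PosDef := pd_congr (hθ1pd.add_posSemidef low) (by abel)
      refine ⟨low, up, ?_⟩
      have := stepMono (Y k) (Y (k + 1)) hpdk hpdk1 up ih3
      rwa [← hYrec k, ← hYrec (k + 1)] at this
  have hermY : ∀ k, (Y k).IsHermitian := by
    intro k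
    have h := (main k).1.1.add hθ1herm
    have e : Y k - θ • (1 : Matrix (Fin n) (Fin n) ℝ)
        + θ • (1 : Matrix (Fin n) (Fin n) ℝ) = Y k := by abel
    rwa [e] at h
  -- convergence of all quadratic forms
  have hqex : ∀ v : Fin n → ℝ, ∃ L : ℝ,
      Filter.Tendsto (fun k => v ⬝ᵥ Y k *ᵥ v) Filter.atTop (nhds L) := by
    intro v
    have hmono : Monotone fun k => v ⬝ᵥ Y k *ᵥ v := by
      refine monotone_nat_of_le_succ fun k => ?_
      have := psd_quad (main k).2.2 v
      rw [sub_mulVec, dotProduct_sub] at this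
      linarith
    have hbdd : BddAbove (Set.range fun k => v ⬝ᵥ Y k *ᵥ v) := by
      refine ⟨v ⬝ᵥ Sρ *ᵥ v, ?_⟩
      rintro x ⟨k, rfl⟩
      have := psd_quad (main k).2.1 v
      rw [sub_mulVec, dotProduct_sub] at this
      linarith
    exact ⟨_, tendsto_atTop_ciSup hmono hbdd⟩
  -- convergence of every entry, by polarization
  have hent : ∀ i j : Fin n, ∃ L : ℝ,
      Filter.Tendsto (fun k => Y k i j) Filter.atTop (nhds L) := by
    intro i j
    obtain ⟨L1, h1⟩ := hqex (Pi.single i 1 + Pi.single j 1)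
    obtain ⟨L2, h2⟩ := hqex (Pi.single i 1)
    obtain ⟨L3, h3⟩ := hqex (Pi.single j 1)
    refine ⟨(L1 - L2 - L3) / 2, ?_⟩
    have hfe : ∀ k, Y k i j =
        ((Pi.single i 1 + Pi.single j 1) ⬝ᵥ Y k *ᵥ (Pi.single i 1 + Pi.single j 1)
          - Pi.single i 1 ⬝ᵥ Y k *ᵥ Pi.single i 1
          - Pi.single j 1 ⬝ᵥ Y k *ᵥ Pi.single j 1) / 2 := by
      intro k
      have hsym : Y k j i = Y k i j := by
        have h := herm_symm (hermY k)
        calc Y k j i = (Y k)ᵀ i j := rfl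
          _ = Y k i j := by rw [h]
      have e1 : ∀ a b : Fin n, Pi.single a (1:ℝ) ⬝ᵥ Y k *ᵥ Pi.single b 1 = Y k a b := by
        intro a b
        rw [mulVec_single_one, single_dotProduct, one_mul, col_apply]
      simp only [mulVec_add, dotProduct_add, add_dotProduct, e1]
      rw [hsym]; ring
    exact (((h1.sub h2).sub h3).div_const 2).congr fun k => (hfe k).symm
  choose Xf hXf using hent
  have hXtend : Filter.Tendsto Y Filter.atTop (nhds (Matrix.of Xf)) := by
    refine tendsto_pi_nhds.2 ?_
    intro i
    rw [tendsto_pi_nhds]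
    intro j
    exact hXf i j
  have hlb : (Matrix.of Xf - θ • (1 : Matrix (Fin n) (Fin n) ℝ)).PosSemidef :=
    psd_limit (fun k => (main k).1) (hXtend.sub tendsto_const_nhds)
  have hub : (Sρ - Matrix.of Xf).PosSemidef :=
    psd_limit (fun k => (main k).2.1) (tendsto_const_nhds.sub hXtend)
  have hXpd : (Matrix.of Xf).PosDef := pd_congr (hθ1pd.add_posSemidef hlb) (by abel)
  have hXdet : (Matrix.of Xf).det ≠ 0 := hXpd.det_pos.ne'
  have hW := (core (Matrix.of Xf) hXpd hub).1
  have hWdet : ((Matrix.of Xf)⁻¹ - Bbar * Bbarᵀ).det ≠ 0 := hW.det_pos.ne'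
  have c1 : ContinuousAt (fun N : Matrix (Fin n) (Fin n) ℝ => N⁻¹ - Bbar * Bbarᵀ)
      (Matrix.of Xf) := (contAt_inv hXdet).sub continuousAt_const
  have c3 : ContinuousAt (fun N : Matrix (Fin n) (Fin n) ℝ => (N⁻¹ - Bbar * Bbarᵀ)⁻¹)
      (Matrix.of Xf) := by
    have := ContinuousAt.comp (f := fun N : Matrix (Fin n) (Fin n) ℝ => N⁻¹ - Bbar * Bbarᵀ)
        (x := Matrix.of Xf) (contAt_inv hWdet) c1
    exact this
  have Gcont : Continuous (fun W : Matrix (Fin n) (Fin n) ℝ =>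
      Abarᵀ * W * Abar + θ • (1 : Matrix (Fin n) (Fin n) ℝ)) :=
    ((continuous_const.matrix_mul continuous_id).matrix_mul continuous_const).add
      continuous_const
  have c4 : ContinuousAt (fun N : Matrix (Fin n) (Fin n) ℝ =>
      Abarᵀ * (N⁻¹ - Bbar * Bbarᵀ)⁻¹ * Abar + θ • (1 : Matrix (Fin n) (Fin n) ℝ))
      (Matrix.of Xf) := by
    have := ContinuousAt.comp (f := fun N : Matrix (Fin n) (Fin n) ℝ => (N⁻¹ - Bbar * Bbarᵀ)⁻¹)
        (x := Matrix.of Xf) Gcont.continuousAt c3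
    exact this
  have hFc := c4.tendsto.comp hXtend
  have hshift : Filter.Tendsto (fun k => Y (k + 1)) Filter.atTop (nhds (Matrix.of Xf)) :=
    (Filter.tendsto_add_atTop_iff_nat 1).2 hXtend
  have hfix : Matrix.of Xf = Abarᵀ * ((Matrix.of Xf)⁻¹ - Bbar * Bbarᵀ)⁻¹ * Abar
      + θ • (1 : Matrix (Fin n) (Fin n) ℝ) :=
    tendsto_nhds_unique hshift (hFc.congr fun k => (hYrec k).symm)
  exact ⟨fun k => ⟨(main k).1, (main k).2.1⟩, fun k => (main k).2.2,
    Matrix.of Xf, hXtend, hlb, hub, hfix⟩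
end

section
/- Time-varying Lyapunov convergence: if F_t → F with F Schur stable and R_t → R (with R_t symmetric positive semidefinite), then the sequence defined by Y_{t+1} = F_t Y_t F_tᵀ + R_t (from any initial symmetric Y_0) converges to the unique solution Y of Y = F Y Fᵀ + R. -/
open Matrix

/-- Schur stability: all complex eigenvalues lie strictly inside the unit
circle. -/
def SchurStable {k : Type*} [Fintype k] [DecidableEq k]
    (M : Matrix k k ℝ) : Prop :=
  ∀ μ ∈ spectrum ℂ (M.map (Complex.ofReal)), ‖μ‖ < 1

open Filter

section
attribute [local instance] Matrix.linftyOpNormedAddCommGroup Matrix.linftyOpNormedRing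
  Matrix.linftyOpNormedAlgebra

variable {n : ℕ}

lemma nnnorm_map_ofReal (M : Matrix (Fin n) (Fin n) ℝ) :
    ‖M.map (Complex.ofReal)‖₊ = ‖M‖₊ := by
  simp [Matrix.linfty_opNNNorm_def, Matrix.map_apply, Complex.nnnorm_real]

lemma map_ofReal_pow (M : Matrix (Fin n) (Fin n) ℝ) (k : ℕ) :
    (M.map (Complex.ofReal)) ^ k = (M ^ k).map (Complex.ofReal) := by
  have h : ∀ N : Matrix (Fin n) (Fin n) ℝ, N.map Complex.ofReal = Complex.ofRealHom.mapMatrix N :=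
    fun _ => rfl
  simp only [h]
  exact (map_pow (Complex.ofRealHom.mapMatrix) M k).symm

lemma schur_eventually_pow_lt (M : Matrix (Fin n) (Fin n) ℝ) (h : SchurStable M) :
    ∀ᶠ k in atTop, ‖M ^ k‖ < 1 := by
  set A := M.map Complex.ofReal with hA
  have hρ : spectralRadius ℂ A < 1 := by
    rw [spectralRadius]
    rcases (spectrum ℂ A).eq_empty_or_nonempty with hs | hs
    · simp [hs]
    · have hfin : (spectrum ℂ A).Finite := Matrix.finite_spectrum A
      have himg : ((fun μ : ℂ => (‖μ‖₊ : ENNReal)) '' spectrum ℂ A).Finite := hfin.image _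
      have hne : ((fun μ : ℂ => (‖μ‖₊ : ENNReal)) '' spectrum ℂ A).Nonempty := hs.image _
      have hmem := hne.csSup_mem himg
      rw [← sSup_image]
      obtain ⟨μ, hμ, hμe⟩ := hmem
      rw [← hμe]
      have h1 := h μ hμ
      have h2 : ‖μ‖₊ < 1 := by exact_mod_cast h1
      show (‖μ‖₊ : ENNReal) < 1
      exact_mod_cast h2
  have hg := spectrum.pow_nnnorm_pow_one_div_tendsto_nhds_spectralRadius A
  have hev : ∀ᶠ k : ℕ in atTop, (‖A ^ k‖₊ : ENNReal) ^ (1 / (k : ℝ)) < 1 :=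
    hg.eventually_lt_const hρ
  filter_upwards [hev, eventually_ge_atTop 1] with k hk hk1
  have hlt : (‖A ^ k‖₊ : ENNReal) < 1 := by
    by_contra hge
    push_neg at hge
    have : (1 : ENNReal) ≤ (‖A ^ k‖₊ : ENNReal) ^ (1 / (k : ℝ)) := by
      calc (1 : ENNReal) = 1 ^ (1 / (k : ℝ)) := (ENNReal.one_rpow _).symm
        _ ≤ (‖A ^ k‖₊ : ENNReal) ^ (1 / (k : ℝ)) :=
          ENNReal.rpow_le_rpow hge (by positivity)
    exact absurd hk (not_lt.mpr this)
  rw [hA, map_ofReal_pow, nnnorm_map_ofReal] at hlt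
  have : ‖M ^ k‖₊ < 1 := by exact_mod_cast hlt
  exact_mod_cast this

lemma schurStable_transpose (M : Matrix (Fin n) (Fin n) ℝ) (h : SchurStable M) :
    SchurStable Mᵀ := by
  intro μ hμ
  apply h μ
  rw [spectrum.mem_iff] at hμ ⊢
  intro hu
  apply hμ
  have ht : (Mᵀ).map Complex.ofReal = (M.map Complex.ofReal)ᵀ := Matrix.transpose_map
  rw [ht]
  have : algebraMap ℂ (Matrix (Fin n) (Fin n) ℂ) μ - (M.map Complex.ofReal)ᵀ
      = (algebraMap ℂ (Matrix (Fin n) (Fin n) ℂ) μ - M.map Complex.ofReal)ᵀ := by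
    rw [Matrix.transpose_sub]
    congr 1
    rw [Matrix.algebraMap_eq_diagonal, Matrix.diagonal_transpose]
  rw [this]
  rw [Matrix.isUnit_iff_isUnit_det] at hu ⊢
  rwa [Matrix.det_transpose]
end

section
attribute [local instance] Matrix.linftyOpNormedAddCommGroup Matrix.linftyOpNormedRing
  Matrix.linftyOpNormedAlgebra

variable {n : ℕ}

/-- iterate identity: if X = Fl X Flᵀ then X = Fl^k X (Fl^k)ᵀ -/
lemma iterate_fixed (Fl X : Matrix (Fin n) (Fin n) ℝ) (hX : X = Fl * X * Flᵀ) (k : ℕ) :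
    X = Fl ^ k * X * (Fl ^ k)ᵀ := by
  induction k with
  | zero => simp
  | succ k ih =>
    calc X = Fl ^ k * X * (Fl ^ k)ᵀ := ih
      _ = Fl ^ k * (Fl * X * Flᵀ) * (Fl ^ k)ᵀ := by rw [← hX]
      _ = Fl ^ (k+1) * X * (Fl ^ (k+1))ᵀ := by
          rw [pow_succ, Matrix.transpose_mul]
          noncomm_ring

lemma lyap_unique (Fl : Matrix (Fin n) (Fin n) ℝ) (m : ℕ)
    (hq : ‖Fl ^ m‖ * ‖(Flᵀ) ^ m‖ < 1)
    (X : Matrix (Fin n) (Fin n) ℝ) (hX : X = Fl * X * Flᵀ) : X = 0 := by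
  have hk := iterate_fixed Fl X hX m
  have hb : ‖X‖ ≤ ‖Fl ^ m‖ * ‖(Flᵀ) ^ m‖ * ‖X‖ := by
    calc ‖X‖ = ‖Fl ^ m * X * (Fl ^ m)ᵀ‖ := by rw [← hk]
      _ ≤ ‖Fl ^ m * X‖ * ‖(Fl ^ m)ᵀ‖ := Matrix.linfty_opNorm_mul _ _
      _ ≤ ‖Fl ^ m‖ * ‖X‖ * ‖(Fl ^ m)ᵀ‖ := by
          gcongr; exact Matrix.linfty_opNorm_mul _ _
      _ = ‖Fl ^ m‖ * ‖(Flᵀ) ^ m‖ * ‖X‖ := by rw [Matrix.transpose_pow]; ring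
  have hX0 : ‖X‖ ≤ 0 := by nlinarith [norm_nonneg X, norm_nonneg (Fl ^ m), norm_nonneg ((Flᵀ) ^ m)]
  have := norm_nonneg X
  have : ‖X‖ = 0 := le_antisymm hX0 this
  exact norm_eq_zero.mp this

/-- the Lyapunov linear map X ↦ X - Fl X Flᵀ -/
def lyapMap (Fl : Matrix (Fin n) (Fin n) ℝ) :
    Matrix (Fin n) (Fin n) ℝ →ₗ[ℝ] Matrix (Fin n) (Fin n) ℝ where
  toFun X := X - Fl * X * Flᵀ
  map_add' X Y := by
    simp only [Matrix.mul_add, Matrix.add_mul]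
    abel
  map_smul' c X := by
    simp only [Matrix.mul_smul, Matrix.smul_mul, RingHom.id_apply, smul_sub]

lemma lyap_exists_unique (Fl : Matrix (Fin n) (Fin n) ℝ) (m : ℕ)
    (hq : ‖Fl ^ m‖ * ‖(Flᵀ) ^ m‖ < 1) (Rl : Matrix (Fin n) (Fin n) ℝ) :
    ∃! X : Matrix (Fin n) (Fin n) ℝ, X = Fl * X * Flᵀ + Rl := by
  have hinj : Function.Injective (lyapMap Fl) := by
    rw [← LinearMap.ker_eq_bot, LinearMap.ker_eq_bot']
    intro X hX0
    apply lyap_unique Fl m hq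
    have : X - Fl * X * Flᵀ = 0 := hX0
    linear_combination (norm := abel) this
  have hsurj : Function.Surjective (lyapMap Fl) :=
    (LinearMap.injective_iff_surjective).mp hinj
  obtain ⟨X, hX⟩ := hsurj Rl
  refine ⟨X, ?_, ?_⟩
  · have : X - Fl * X * Flᵀ = Rl := hX
    linear_combination (norm := abel) this
  · intro Z hZ
    have hd : Z - X = Fl * (Z - X) * Flᵀ := by
      have h1 : X - Fl * X * Flᵀ = Rl := hX
      rw [Matrix.mul_sub, Matrix.sub_mul]
      linear_combination (norm := abel) hZ - h1  -- Z = Fl Z Flᵀ + Rl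
    have := lyap_unique Fl m hq _ hd
    exact sub_eq_zero.mp this
end

section
attribute [local instance] Matrix.linftyOpNormedAddCommGroup Matrix.linftyOpNormedRing
  Matrix.linftyOpNormedAlgebra

open Filter

variable {n : ℕ}

/-- backward product of the `F`s over a window -/
def Pprod (F : ℕ → Matrix (Fin n) (Fin n) ℝ) (t : ℕ) : ℕ → Matrix (Fin n) (Fin n) ℝ
  | 0 => 1
  | k + 1 => F (t + k) * Pprod F t k

/-- accumulated perturbation -/
def Ssum (F d : ℕ → Matrix (Fin n) (Fin n) ℝ) (t : ℕ) : ℕ → Matrix (Fin n) (Fin n) ℝ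
  | 0 => 0
  | k + 1 => F (t + k) * Ssum F d t k * (F (t + k))ᵀ + d (t + k)

/-- geometric-type constant -/
def cK (B : ℝ) : ℕ → ℝ
  | 0 => 0
  | k + 1 => B ^ 2 * cK B k + 1

lemma cK_nonneg (B : ℝ) (k : ℕ) : 0 ≤ cK B k := by
  induction k with
  | zero => simp [cK]
  | succ k ih => simp only [cK]; nlinarith [sq_nonneg B]

lemma norm_triple (A X C : Matrix (Fin n) (Fin n) ℝ) : ‖A * X * C‖ ≤ ‖A‖ * ‖X‖ * ‖C‖ := by
  calc ‖A * X * C‖ ≤ ‖A * X‖ * ‖C‖ := Matrix.linfty_opNorm_mul _ _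
    _ ≤ ‖A‖ * ‖X‖ * ‖C‖ := by gcongr; exact Matrix.linfty_opNorm_mul _ _

lemma e_unroll (F d e : ℕ → Matrix (Fin n) (Fin n) ℝ)
    (he : ∀ t, e (t + 1) = F t * e t * (F t)ᵀ + d t) (t k : ℕ) :
    e (t + k) = Pprod F t k * e t * (Pprod F t k)ᵀ + Ssum F d t k := by
  induction k with
  | zero => simp [Pprod, Ssum]
  | succ k ih =>
    have : t + (k + 1) = (t + k) + 1 := rfl
    rw [this, he (t + k), ih]
    simp only [Pprod, Ssum, Matrix.transpose_mul, Matrix.mul_add, Matrix.add_mul,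
      Matrix.mul_assoc]
    abel

lemma P_tendsto (F : ℕ → Matrix (Fin n) (Fin n) ℝ) (Flim : Matrix (Fin n) (Fin n) ℝ)
    (hF : Tendsto F atTop (nhds Flim)) (k : ℕ) :
    Tendsto (fun t => Pprod F t k) atTop (nhds (Flim ^ k)) := by
  induction k with
  | zero => simpa [Pprod] using tendsto_const_nhds
  | succ k ih =>
    have h1 : Tendsto (fun t => F (t + k)) atTop (nhds Flim) :=
      hF.comp (tendsto_add_atTop_nat k)
    have := h1.mul ih
    simpa [Pprod, pow_succ'] using this

lemma S_bound (F d : ℕ → Matrix (Fin n) (Fin n) ℝ) (B δ : ℝ) (hδ : 0 ≤ δ) (T : ℕ)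
    (hFB : ∀ s ≥ T, ‖F s‖ ≤ B ∧ ‖(F s)ᵀ‖ ≤ B) (hdδ : ∀ s ≥ T, ‖d s‖ ≤ δ)
    (t : ℕ) (ht : T ≤ t) (k : ℕ) : ‖Ssum F d t k‖ ≤ δ * cK B k := by
  induction k with
  | zero => simp [Ssum, cK]
  | succ k ih =>
    have hs : T ≤ t + k := le_trans ht (Nat.le_add_right _ _)
    obtain ⟨hB1, hB2⟩ := hFB (t + k) hs
    have hB0 : 0 ≤ B := le_trans (norm_nonneg _) hB1
    calc ‖Ssum F d t (k + 1)‖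
        ≤ ‖F (t + k) * Ssum F d t k * (F (t + k))ᵀ‖ + ‖d (t + k)‖ := norm_add_le _ _
      _ ≤ ‖F (t + k)‖ * ‖Ssum F d t k‖ * ‖(F (t + k))ᵀ‖ + δ :=
          add_le_add (norm_triple _ _ _) (hdδ _ hs)
      _ ≤ B * (δ * cK B k) * B + δ :=
          add_le_add_left
            (mul_le_mul (mul_le_mul hB1 ih (norm_nonneg _) hB0) hB2 (norm_nonneg _)
              (mul_nonneg hB0 (mul_nonneg hδ (cK_nonneg B k)))) δ
      _ = δ * cK B (k + 1) := by simp only [cK]; ring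

set_option maxHeartbeats 1000000 in
lemma key_conv (F : ℕ → Matrix (Fin n) (Fin n) ℝ) (Flim : Matrix (Fin n) (Fin n) ℝ)
    (hF : Tendsto F atTop (nhds Flim))
    (m : ℕ) (hm1 : 1 ≤ m) (hq : ‖Flim ^ m‖ * ‖(Flim ^ m)ᵀ‖ < 1)
    (d : ℕ → Matrix (Fin n) (Fin n) ℝ) (hd : Tendsto d atTop (nhds 0))
    (e : ℕ → Matrix (Fin n) (Fin n) ℝ)
    (he : ∀ t, e (t + 1) = F t * e t * (F t)ᵀ + d t) :
    Tendsto e atTop (nhds 0) := by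
  set θ := ‖Flim ^ m‖ * ‖(Flim ^ m)ᵀ‖ with hθ
  have hθ0 : 0 ≤ θ := mul_nonneg (norm_nonneg _) (norm_nonneg _)
  set q : ℝ := (1 + θ) / 2 with hqdef
  have hq1 : q < 1 := by rw [hqdef]; linarith
  have hθq : θ < q := by rw [hqdef]; linarith
  have hq0 : 0 ≤ q := by rw [hqdef]; linarith
  -- bound on F and its transpose
  set B : ℝ := max (‖Flim‖ + 1) (max (‖Flimᵀ‖ + 1) 1) with hBdef
  have hFt : Tendsto (fun t => (F t)ᵀ) atTop (nhds Flimᵀ) :=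
    ((continuous_id.matrix_transpose).tendsto Flim).comp hF
  have hTB : ∀ᶠ s in atTop, ‖F s‖ ≤ B ∧ ‖(F s)ᵀ‖ ≤ B := by
    have h1 : ∀ᶠ s in atTop, ‖F s - Flim‖ < 1 :=
      (tendsto_iff_norm_sub_tendsto_zero.mp hF).eventually_lt_const one_pos
    have h2 : ∀ᶠ s in atTop, ‖(F s)ᵀ - Flimᵀ‖ < 1 :=
      (tendsto_iff_norm_sub_tendsto_zero.mp hFt).eventually_lt_const one_pos
    filter_upwards [h1, h2] with s hs1 hs2
    constructor
    · have := norm_sub_norm_le (F s) Flim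
      have hle : ‖Flim‖ + 1 ≤ B := le_max_left _ _
      linarith
    · have := norm_sub_norm_le (F s)ᵀ Flimᵀ
      have hle : ‖Flimᵀ‖ + 1 ≤ B := le_trans (le_max_left _ _) (le_max_right _ _)
      linarith
  -- contraction of window products, eventually
  have hPt : Tendsto (fun t => ‖Pprod F t m‖ * ‖(Pprod F t m)ᵀ‖) atTop (nhds θ) := by
    have h1 := P_tendsto F Flim hF m
    have h2 : Tendsto (fun t => (Pprod F t m)ᵀ) atTop (nhds ((Flim ^ m)ᵀ)) :=
      ((continuous_id.matrix_transpose).tendsto _).comp h1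
    exact (h1.norm.mul h2.norm)
  have hPq : ∀ᶠ t in atTop, ‖Pprod F t m‖ * ‖(Pprod F t m)ᵀ‖ ≤ q :=
    (hPt.eventually_lt_const hθq).mono fun t ht => le_of_lt ht
  set K : ℝ := cK B m with hKdef
  have hK0 : 0 ≤ K := cK_nonneg B m
  apply Metric.tendsto_atTop.mpr
  intro ε hε
  set δ : ℝ := (1 - q) * ε / (2 * (K + 1)) with hδdef
  have hδ0 : 0 < δ := by
    apply div_pos (by nlinarith) (by nlinarith)
  have hdδ : ∀ᶠ s in atTop, ‖d s‖ ≤ δ := by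
    have := (tendsto_iff_norm_sub_tendsto_zero.mp hd).eventually_lt_const hδ0
    simpa using this.mono fun s hs => le_of_lt (by simpa using hs)
  obtain ⟨T₂, hT₂⟩ := (hTB.and (hPq.and hdδ)).exists_forall_of_atTop
  have hFB : ∀ s ≥ T₂, ‖F s‖ ≤ B ∧ ‖(F s)ᵀ‖ ≤ B := fun s hs => (hT₂ s hs).1
  have hPq2 : ∀ t ≥ T₂, ‖Pprod F t m‖ * ‖(Pprod F t m)ᵀ‖ ≤ q := fun t ht => (hT₂ t ht).2.1
  have hdδ2 : ∀ s ≥ T₂, ‖d s‖ ≤ δ := fun s hs => (hT₂ s hs).2.2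
  -- one-block contraction
  have hblock : ∀ t ≥ T₂, ‖e (t + m)‖ ≤ q * ‖e t‖ + (1 - q) * ε / 2 := by
    intro t ht
    have hSb := S_bound F d B δ hδ0.le T₂ hFB hdδ2 t ht m
    have hP := hPq2 t ht
    calc ‖e (t + m)‖
        = ‖Pprod F t m * e t * (Pprod F t m)ᵀ + Ssum F d t m‖ := by
          rw [e_unroll F d e he t m]
      _ ≤ ‖Pprod F t m * e t * (Pprod F t m)ᵀ‖ + ‖Ssum F d t m‖ := norm_add_le _ _
      _ ≤ ‖Pprod F t m‖ * ‖e t‖ * ‖(Pprod F t m)ᵀ‖ + δ * K :=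
          add_le_add (norm_triple _ _ _) hSb
      _ ≤ q * ‖e t‖ + (1 - q) * ε / 2 := by
          have h1 : ‖Pprod F t m‖ * ‖e t‖ * ‖(Pprod F t m)ᵀ‖ ≤ q * ‖e t‖ := by
            have := mul_le_mul_of_nonneg_right hP (norm_nonneg (e t))
            nlinarith [norm_nonneg (e t), norm_nonneg (Pprod F t m),
              norm_nonneg ((Pprod F t m)ᵀ)]
          have h2 : δ * K ≤ (1 - q) * ε / 2 := by
            rw [hδdef]
            rw [div_mul_eq_mul_div, div_le_div_iff₀ (by nlinarith) (by norm_num)]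
            nlinarith
          linarith
  -- initial block maximum
  set M₀ : ℝ := ∑ i ∈ Finset.range m, ‖e (T₂ + i)‖ with hM₀def
  have hM₀0 : 0 ≤ M₀ := Finset.sum_nonneg fun i _ => norm_nonneg _
  have hM₀i : ∀ i < m, ‖e (T₂ + i)‖ ≤ M₀ := by
    intro i hi
    exact Finset.single_le_sum (fun j _ => norm_nonneg (e (T₂ + j))) (Finset.mem_range.mpr hi)
  -- iterated block bound
  have hclaim : ∀ j : ℕ, ∀ i < m, ‖e (T₂ + (j * m + i))‖ ≤ q ^ j * M₀ + ε / 2 := by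
    intro j
    induction j with
    | zero =>
      intro i hi
      have h := hM₀i i hi
      simp only [pow_zero, one_mul, Nat.zero_mul, zero_add]
      linarith
    | succ j ih =>
      intro i hi
      have harith : T₂ + ((j + 1) * m + i) = (T₂ + (j * m + i)) + m := by ring
      have ht' : T₂ ≤ T₂ + (j * m + i) := Nat.le_add_right _ _
      have hb := hblock (T₂ + (j * m + i)) ht'
      rw [harith]
      have hih := ih i hi
      calc ‖e ((T₂ + (j * m + i)) + m)‖
          ≤ q * ‖e (T₂ + (j * m + i))‖ + (1 - q) * ε / 2 := hb
        _ ≤ q * (q ^ j * M₀ + ε / 2) + (1 - q) * ε / 2 := by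
            have := mul_le_mul_of_nonneg_left hih hq0
            linarith
        _ = q ^ (j + 1) * M₀ + ε / 2 := by ring
  -- choose J with q^J * M₀ small
  have hpow : Tendsto (fun j : ℕ => q ^ j * M₀) atTop (nhds 0) := by
    have := (tendsto_pow_atTop_nhds_zero_of_lt_one hq0 hq1).mul_const M₀
    simpa using this
  obtain ⟨J, hJ⟩ := (hpow.eventually_lt_const (by linarith : (0:ℝ) < ε / 2)).exists
  refine ⟨T₂ + J * m, fun t ht => ?_⟩
  have hm0 : 0 < m := hm1
  set k := t - T₂ with hkdef
  have htk : t = T₂ + k := by omega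
  have hkJ : J * m ≤ k := by omega
  set j := k / m with hjdef
  set i := k % m with hidef
  have hkji : k = j * m + i := by
    have h := Nat.div_add_mod k m
    rw [Nat.mul_comm] at h
    rw [hjdef, hidef]
    omega
  have hiu : i < m := Nat.mod_lt _ hm0
  have hjJ : J ≤ j := by
    rw [hjdef]
    exact Nat.le_div_iff_mul_le hm0 |>.mpr hkJ
  have hqj : q ^ j ≤ q ^ J := pow_le_pow_of_le_one hq0 (le_of_lt hq1) hjJ
  have := hclaim j i hiu
  rw [← hkji, ← htk] at this
  rw [dist_zero_right]
  have : ‖e t‖ ≤ q ^ J * M₀ + ε / 2 := by nlinarith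
  linarith

/-- Time-varying Lyapunov convergence: if `F_t → F` with `F`
Schur stable and `R_t → R` with the `R_t` symmetric positive semidefinite, then
the sequence `Y_{t+1} = F_t Y_t F_tᵀ + R_t` (from any symmetric `Y_0`)
converges to the unique solution of `Y = F Y Fᵀ + R`. -/
theorem stmt_18 {n : ℕ} (F : ℕ → Matrix (Fin n) (Fin n) ℝ)
    (Flim : Matrix (Fin n) (Fin n) ℝ)
    (hF : Filter.Tendsto F Filter.atTop (nhds Flim)) (hFs : SchurStable Flim)
    (R : ℕ → Matrix (Fin n) (Fin n) ℝ) (hRpsd : ∀ t, (R t).PosSemidef)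
    (Rlim : Matrix (Fin n) (Fin n) ℝ)
    (hR : Filter.Tendsto R Filter.atTop (nhds Rlim))
    (Y : ℕ → Matrix (Fin n) (Fin n) ℝ) (hY0 : (Y 0).IsHermitian)
    (hYrec : ∀ t, Y (t + 1) = F t * Y t * (F t)ᵀ + R t) :
    ∃ Ylim : Matrix (Fin n) (Fin n) ℝ,
      Filter.Tendsto Y Filter.atTop (nhds Ylim) ∧
      Ylim = Flim * Ylim * Flimᵀ + Rlim ∧
      ∀ Z : Matrix (Fin n) (Fin n) ℝ, Z = Flim * Z * Flimᵀ + Rlim → Z = Ylim := by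
  -- find a power making both norms small
  obtain ⟨m, hm1, hm2, hm3⟩ :=
    ((schur_eventually_pow_lt Flim hFs).and
      ((schur_eventually_pow_lt Flimᵀ (schurStable_transpose Flim hFs)).and
        (eventually_ge_atTop 1))).exists
  have hq : ‖Flim ^ m‖ * ‖(Flimᵀ) ^ m‖ < 1 := by
    nlinarith [norm_nonneg (Flim ^ m), norm_nonneg ((Flimᵀ) ^ m)]
  have hqT : ‖Flim ^ m‖ * ‖(Flim ^ m)ᵀ‖ < 1 := by
    rwa [Matrix.transpose_pow]
  -- the unique fixed point
  obtain ⟨Ylim, hYlim, hYuniq⟩ := lyap_exists_unique Flim m hq Rlim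
  refine ⟨Ylim, ?_, hYlim, fun Z hZ => hYuniq Z hZ⟩
  -- convergence
  have hFt : Filter.Tendsto (fun t => (F t)ᵀ) Filter.atTop (nhds Flimᵀ) :=
    ((continuous_id.matrix_transpose).tendsto Flim).comp hF
  set d : ℕ → Matrix (Fin n) (Fin n) ℝ :=
    fun t => F t * Ylim * (F t)ᵀ + R t - (Flim * Ylim * Flimᵀ + Rlim) with hddef
  have hd : Filter.Tendsto d Filter.atTop (nhds 0) := by
    have h1 : Filter.Tendsto (fun t => F t * Ylim * (F t)ᵀ + R t) Filter.atTop
        (nhds (Flim * Ylim * Flimᵀ + Rlim)) :=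
      ((hF.mul tendsto_const_nhds).mul hFt).add hR
    have := h1.sub (tendsto_const_nhds (x := Flim * Ylim * Flimᵀ + Rlim))
    simpa using this
  set e : ℕ → Matrix (Fin n) (Fin n) ℝ := fun t => Y t - Ylim with hedef
  have he : ∀ t, e (t + 1) = F t * e t * (F t)ᵀ + d t := by
    intro t
    have hfix : Flim * Ylim * Flimᵀ + Rlim = Ylim := hYlim.symm
    simp only [hedef, hddef, hYrec t, Matrix.mul_sub, Matrix.sub_mul]
    rw [hfix]
    abel
  have hconv : Filter.Tendsto e Filter.atTop (nhds 0) :=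
    key_conv F Flim hF m hm3 hqT d hd e he
  have := hconv.add (tendsto_const_nhds (x := Ylim))
  simp only [zero_add] at this
  have heq : (fun t => e t + Ylim) = Y := by
    funext t
    simp [hedef]
  rwa [heq] at this

end
end
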